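/- arXiv:2003.12276 — 3 statements merged into one kernel-verified Lean document; each statement's English description precedes it below -/
import Mathlib

section
/- Let Ω = {1,...,n}, let μ be a capacity on Ω, and define the Choquet integral of f : Ω → [0,∞) by C(f;μ) = ∫_0^∞ μ({i ∈ Ω : f(i) ≥ t}) dt. If f, g : Ω → [0,∞) are comonotonic, i.e., (f(i) − f(j))·(g(i) − g(j)) ≥ 0 for all i, j ∈ Ω, and a, b ≥ 0 are real numbers, then C(a·f + b·g; μ) = a·C(f;μ) + b·C(g;μ). -/
open MeasureTheory

/-- The Choquet integral of `f : Ω → [0,∞)` with respect to a capacity `μ`: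
`C(f;μ) = ∫_0^∞ μ({i : f i ≥ t}) dt`. -/
noncomputable def choquetIntegral {n : ℕ} (μ : Finset (Fin n) → ℝ) (f : Fin n → ℝ) : ℝ :=
  ∫ t in Set.Ioi (0 : ℝ), μ (Finset.univ.filter fun i => t ≤ f i)

/-- The "tail" set of indices whose rank (under `σ.symm`) is at least `k`. -/
def choquetTail {n : ℕ} (σ : Equiv.Perm (Fin n)) (k : ℕ) : Finset (Fin n) :=
  Finset.univ.filter fun i => k ≤ (σ.symm i : ℕ)

lemma integral_ite_le (c : ℝ) (hc : 0 ≤ c) :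
    ∫ t in Set.Ioi (0 : ℝ), (if t ≤ c then (1 : ℝ) else 0) = c := by
  have h1 : (fun t : ℝ => if t ≤ c then (1 : ℝ) else 0)
      = Set.indicator (Set.Iic c) (fun _ => (1 : ℝ)) := by
    ext t
    by_cases h : t ≤ c <;> simp [Set.indicator, Set.mem_Iic, h]
  rw [h1, MeasureTheory.integral_indicator measurableSet_Iic,
    Measure.restrict_restrict measurableSet_Iic]
  have h2 : Set.Iic c ∩ Set.Ioi (0 : ℝ) = Set.Ioc 0 c := by
    ext t; simp [Set.mem_Iic, Set.mem_Ioi, Set.mem_Ioc, and_comm]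
  rw [h2, MeasureTheory.setIntegral_const, Real.volume_real_Ioc_of_le hc, smul_eq_mul, mul_one,
    sub_zero]

lemma integrable_ite_le (c : ℝ) (d : ℝ) :
    Integrable (fun t : ℝ => d * (if t ≤ c then (1 : ℝ) else 0))
      (volume.restrict (Set.Ioi (0 : ℝ))) := by
  have h1 : (fun t : ℝ => d * (if t ≤ c then (1 : ℝ) else 0))
      = Set.indicator (Set.Iic c) (fun _ => d) := by
    ext t
    by_cases h : t ≤ c <;> simp [Set.indicator, Set.mem_Iic, h]
  rw [h1]
  rw [integrable_indicator_iff measurableSet_Iic]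
  rw [IntegrableOn, Measure.restrict_restrict measurableSet_Iic]
  refine integrableOn_const (ne_of_lt ?_)
  calc volume (Set.Iic c ∩ Set.Ioi (0:ℝ)) ≤ volume (Set.Ioc 0 c) := by
        refine measure_mono ?_
        intro t ht
        exact ⟨ht.2, ht.1⟩
    _ < ⊤ := by rw [Real.volume_Ioc]; exact ENNReal.ofReal_lt_top

/-- Key lemma: the Choquet integral of a nonnegative function that is monotone
along a permutation `σ` equals a finite telescoping sum. -/
lemma choquet_eq_sum {n : ℕ} (μ : Finset (Fin n) → ℝ) (hμ_empty : μ ∅ = 0)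
    (σ : Equiv.Perm (Fin n)) (h : Fin n → ℝ) (hh : ∀ i, 0 ≤ h i)
    (hmono : Monotone (h ∘ σ)) :
    choquetIntegral μ h =
      ∑ k : Fin n, (μ (choquetTail σ k.val) - μ (choquetTail σ (k.val + 1))) * h (σ k) := by
  have htail_n : choquetTail σ n = ∅ := by
    ext i
    simp [choquetTail, Nat.not_le.2 (Fin.is_lt (σ.symm i))]
  -- Step A: pointwise identity of the integrand on Ioi 0
  have stepA : ∀ t : ℝ, 0 < t →
      μ (Finset.univ.filter fun i => t ≤ h i)
        = ∑ k : Fin n, (μ (choquetTail σ k.val) - μ (choquetTail σ (k.val + 1))) *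
            (if t ≤ h (σ k) then (1 : ℝ) else 0) := by
    intro t ht
    by_cases hne : (Finset.univ.filter fun k : Fin n => t ≤ h (σ k)).Nonempty
    · set I := Finset.univ.filter fun k : Fin n => t ≤ h (σ k) with hI
      set k0 : Fin n := I.min' hne with hk0
      have hk0mem : k0 ∈ I := I.min'_mem hne
      have hk0t : t ≤ h (σ k0) := (Finset.mem_filter.1 hk0mem).2
      have hiff : ∀ k : Fin n, t ≤ h (σ k) ↔ k0 ≤ k := by
        intro k
        constructor
        · intro hk
          exact I.min'_le k (Finset.mem_filter.2 ⟨Finset.mem_univ _, hk⟩)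
        · intro hk
          exact le_trans hk0t (hmono hk)
      -- the level set equals the tail at k0
      have hset : (Finset.univ.filter fun i => t ≤ h i) = choquetTail σ k0.val := by
        ext i
        simp only [choquetTail, Finset.mem_filter, Finset.mem_univ, true_and]
        have : h i = h (σ (σ.symm i)) := by rw [Equiv.apply_symm_apply]
        rw [this, hiff (σ.symm i), Fin.le_def]
      rw [hset]
      -- telescoping
      have hterm : ∀ k : Fin n,
          (μ (choquetTail σ k.val) - μ (choquetTail σ (k.val + 1))) *
            (if t ≤ h (σ k) then (1 : ℝ) else 0)
          = μ (choquetTail σ (max k.val k0.val)) - μ (choquetTail σ (max (k.val + 1) k0.val)) := by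
        intro k
        by_cases hk : k0 ≤ k
        · rw [if_pos ((hiff k).2 hk)]
          have h1 : max k.val k0.val = k.val := max_eq_left (Fin.le_def.1 hk)
          have h2 : max (k.val + 1) k0.val = k.val + 1 :=
            max_eq_left (le_trans (Fin.le_def.1 hk) (Nat.le_succ _))
          rw [h1, h2, mul_one]
        · rw [if_neg (fun hc => hk ((hiff k).1 hc))]
          have hlt : k.val < k0.val := Fin.lt_def.1 (lt_of_not_ge hk)
          have h1 : max k.val k0.val = k0.val := max_eq_right (le_of_lt hlt)
          have h2 : max (k.val + 1) k0.val = k0.val := max_eq_right hlt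
          rw [h1, h2, mul_zero, sub_self]
      rw [Finset.sum_congr rfl fun k _ => hterm k]
      rw [Fin.sum_univ_eq_sum_range
        (fun k => μ (choquetTail σ (max k k0.val)) - μ (choquetTail σ (max (k + 1) k0.val)))]
      rw [Finset.sum_range_sub' (fun k => μ (choquetTail σ (max k k0.val)))]
      have h0 : max 0 k0.val = k0.val := Nat.max_eq_right (Nat.zero_le _)
      have hn : max n k0.val = n := Nat.max_eq_left (le_of_lt k0.isLt)
      rw [h0, hn, htail_n, hμ_empty, sub_zero]
    · -- level set is empty
      have hempty : (Finset.univ.filter fun i => t ≤ h i) = ∅ := by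
        rw [Finset.filter_eq_empty_iff]
        intro i _
        intro hc
        apply hne
        refine ⟨σ.symm i, Finset.mem_filter.2 ⟨Finset.mem_univ _, ?_⟩⟩
        rwa [Equiv.apply_symm_apply]
      rw [hempty, hμ_empty]
      rw [Finset.not_nonempty_iff_eq_empty, Finset.filter_eq_empty_iff] at hne
      symm
      refine Finset.sum_eq_zero fun k _ => ?_
      rw [if_neg (hne (Finset.mem_univ k)), mul_zero]
  -- Step B: integrate
  unfold choquetIntegral
  have hcongr : ∫ t in Set.Ioi (0 : ℝ), μ (Finset.univ.filter fun i => t ≤ h i)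
      = ∫ t in Set.Ioi (0 : ℝ), ∑ k : Fin n,
          (μ (choquetTail σ k.val) - μ (choquetTail σ (k.val + 1))) *
            (if t ≤ h (σ k) then (1 : ℝ) else 0) := by
    refine MeasureTheory.setIntegral_congr_fun measurableSet_Ioi ?_
    intro t ht
    exact stepA t ht
  rw [hcongr]
  rw [MeasureTheory.integral_finset_sum _ (fun k _ => integrable_ite_le (h (σ k)) _)]
  refine Finset.sum_congr rfl fun k _ => ?_
  rw [MeasureTheory.integral_const_mul, integral_ite_le (h (σ k)) (hh (σ k))]

/-- the Choquet integral is additive (and positively homogeneous)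
on comonotonic functions. -/
theorem choquetIntegral_comonotone_additive {n : ℕ}
    (μ : Finset (Fin n) → ℝ) (hμ_empty : μ ∅ = 0)
    (hμ_mono : ∀ A B : Finset (Fin n), A ⊆ B → μ A ≤ μ B)
    (f g : Fin n → ℝ) (hf : ∀ i, 0 ≤ f i) (hg : ∀ i, 0 ≤ g i)
    (hcomon : ∀ i j, 0 ≤ (f i - f j) * (g i - g j))
    (a b : ℝ) (ha : 0 ≤ a) (hb : 0 ≤ b) :
    choquetIntegral μ (fun i => a * f i + b * g i) =
      a * choquetIntegral μ f + b * choquetIntegral μ g := by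
  set σ : Equiv.Perm (Fin n) := Tuple.sort (fun i => f i + g i) with hσ
  have hsum_mono : Monotone ((fun i => f i + g i) ∘ σ) := Tuple.monotone_sort _
  have hfmono : Monotone (f ∘ σ) := by
    intro k l hkl
    by_contra hc
    push_neg at hc
    simp only [Function.comp_apply] at hc
    have h1 : 0 ≤ (f (σ l) - f (σ k)) * (g (σ l) - g (σ k)) := hcomon _ _
    have h2 : g (σ l) ≤ g (σ k) := by nlinarith
    have h3 := hsum_mono hkl
    simp only [Function.comp_apply] at h3 hc
    linarith
  have hgmono : Monotone (g ∘ σ) := by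
    intro k l hkl
    by_contra hc
    push_neg at hc
    simp only [Function.comp_apply] at hc
    have h1 : 0 ≤ (f (σ l) - f (σ k)) * (g (σ l) - g (σ k)) := hcomon _ _
    have h2 : f (σ l) ≤ f (σ k) := by nlinarith
    have h3 := hsum_mono hkl
    simp only [Function.comp_apply] at h3 hc
    linarith
  have hcmono : Monotone ((fun i => a * f i + b * g i) ∘ σ) := by
    intro k l hkl
    have h1 := hfmono hkl
    have h2 := hgmono hkl
    simp only [Function.comp_apply] at h1 h2 ⊢
    nlinarith
  rw [choquet_eq_sum μ hμ_empty σ f hf hfmono,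
    choquet_eq_sum μ hμ_empty σ g hg hgmono,
    choquet_eq_sum μ hμ_empty σ (fun i => a * f i + b * g i)
      (fun i => add_nonneg (mul_nonneg ha (hf i)) (mul_nonneg hb (hg i))) hcmono]
  rw [Finset.mul_sum, Finset.mul_sum, ← Finset.sum_add_distrib]
  refine Finset.sum_congr rfl fun k _ => ?_
  ring
end

section
/- Let Ω = {1,...,n}, let μ be a capacity on Ω, let f : Ω → [0,∞), and let τ be a ranking permutation of f. Define the Möbius transform of μ by 𝔡(A) = ∑_{B ⊆ A} (−1)^{|A|−|B|} μ(B) for A ⊆ Ω. Then the Choquet integral satisfies ∑_{i=1}^{n} f(τ(i))·(μ({τ(i),...,τ(n)}) − μ({τ(i+1),...,τ(n)})) = ∑_{∅ ≠ A ⊆ Ω} 𝔡(A) · min_{i ∈ A} f(i). -/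
/-- The set `{τ(i), τ(i+1), ..., τ(n)}`. -/
def tailSet {n : ℕ} (τ : Equiv.Perm (Fin n)) (i : Fin n) : Finset (Fin n) :=
  (Finset.univ.filter fun j : Fin n => i ≤ j).image τ

/-- The set `{τ(i+1), ..., τ(n)}` (empty when `i = n`). -/
def strictTailSet {n : ℕ} (τ : Equiv.Perm (Fin n)) (i : Fin n) : Finset (Fin n) :=
  (Finset.univ.filter fun j : Fin n => i < j).image τ

/-- The Möbius transform of a capacity:
`𝔡(A) = ∑_{B ⊆ A} (−1)^{|A|−|B|} μ(B)`. -/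
def mobius {n : ℕ} (μ : Finset (Fin n) → ℝ) (A : Finset (Fin n)) : ℝ :=
  ∑ B ∈ A.powerset, (-1 : ℝ) ^ (A.card - B.card) * μ B

lemma pow_sum_powerset {n : ℕ} (s : Finset (Fin n)) :
    ∑ D ∈ s.powerset, (-1 : ℝ) ^ D.card = if s = ∅ then 1 else 0 := by
  have := Finset.sum_powerset_neg_one_pow_card (x := s)
  have h2 : ((∑ m ∈ s.powerset, (-1 : ℤ) ^ m.card : ℤ) : ℝ)
      = ∑ D ∈ s.powerset, (-1 : ℝ) ^ D.card := by push_cast; ring_nf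
  rw [← h2, this]
  split <;> norm_num

lemma mobius_inv {n : ℕ} (μ : Finset (Fin n) → ℝ) (C : Finset (Fin n)) :
    ∑ A ∈ C.powerset, mobius μ A = μ C := by
  unfold mobius
  rw [Finset.sum_sigma']
  rw [Finset.sum_nbij' (i := fun p => (⟨p.2, p.1⟩ : Σ _ : Finset (Fin n), Finset (Fin n)))
    (j := fun p => ⟨p.2, p.1⟩)
    (t := C.powerset.sigma (fun B => (C.powerset).filter (fun A => B ⊆ A)))
    (g := fun p => (-1 : ℝ) ^ (p.2.card - p.1.card) * μ p.1)]
  · rw [Finset.sum_sigma]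
    have key : ∀ B ∈ C.powerset,
        ∑ A ∈ (C.powerset).filter (fun A => B ⊆ A), (-1 : ℝ) ^ (A.card - B.card) * μ B
        = (if C \ B = ∅ then 1 else 0) * μ B := by
      intro B hB
      rw [Finset.mem_powerset] at hB
      rw [← Finset.sum_mul]
      congr 1
      rw [← pow_sum_powerset (C \ B)]
      apply Finset.sum_nbij' (i := fun A => A \ B) (j := fun D => B ∪ D)
      · intro A hA
        simp only [Finset.mem_filter, Finset.mem_powerset] at hA
        simp [Finset.mem_powerset]
        exact hA.1.trans Finset.subset_union_right
      · intro D hD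
        simp only [Finset.mem_powerset] at hD
        simp only [Finset.mem_filter, Finset.mem_powerset]
        constructor
        · exact Finset.union_subset hB (hD.trans (Finset.sdiff_subset))
        · exact Finset.subset_union_left
      · intro A hA
        simp only [Finset.mem_filter, Finset.mem_powerset] at hA
        exact Finset.union_sdiff_of_subset hA.2
      · intro D hD
        simp only [Finset.mem_powerset] at hD
        rw [Finset.union_sdiff_cancel_left]
        exact Finset.disjoint_left.mpr fun a haB haD => (Finset.mem_sdiff.mp (hD haD)).2 haB
      · intro A hA
        simp only [Finset.mem_filter, Finset.mem_powerset] at hA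
        congr 1
        rw [Finset.card_sdiff_of_subset hA.2]
    rw [Finset.sum_congr rfl key]
    rw [Finset.sum_eq_single C]
    · simp
    · intro B hB hBC
      rw [Finset.mem_powerset] at hB
      rw [if_neg (fun h => hBC (Finset.Subset.antisymm hB
        (Finset.sdiff_eq_empty_iff_subset.mp h))), zero_mul]
    · intro h; exact absurd (Finset.mem_powerset.mpr le_rfl) h
  · intro p hp
    simp only [Finset.mem_sigma, Finset.mem_powerset] at hp ⊢
    simp only [Finset.mem_filter, Finset.mem_powerset]
    exact ⟨hp.2.trans hp.1, hp.1, hp.2⟩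
  · intro p hp
    simp only [Finset.mem_sigma, Finset.mem_powerset, Finset.mem_filter] at hp ⊢
    exact ⟨hp.2.1, hp.2.2⟩
  · intro p _; rfl
  · intro p _; rfl
  · intro p _; rfl

lemma not_mem_strictTailSet {n : ℕ} (τ : Equiv.Perm (Fin n)) (i : Fin n) :
    τ i ∉ strictTailSet τ i := by
  simp only [strictTailSet, Finset.mem_image, Finset.mem_filter, Finset.mem_univ, true_and]
  rintro ⟨j, hij, hj⟩
  exact absurd (τ.injective hj) (ne_of_gt hij)

lemma tailSet_eq {n : ℕ} (τ : Equiv.Perm (Fin n)) (i : Fin n) :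
    tailSet τ i = insert (τ i) (strictTailSet τ i) := by
  unfold tailSet strictTailSet
  rw [show (Finset.univ.filter fun j : Fin n => i ≤ j)
      = insert i (Finset.univ.filter fun j : Fin n => i < j) by
    ext j
    simp only [Finset.mem_filter, Finset.mem_univ, true_and, Finset.mem_insert]
    constructor
    · intro h; rcases eq_or_lt_of_le h with h | h
      · exact Or.inl h.symm
      · exact Or.inr h
    · rintro (rfl | h)
      exacts [le_rfl, h.le]]
  rw [Finset.image_insert]

lemma mem_strictTailSet_iff {n : ℕ} (τ : Equiv.Perm (Fin n)) (i : Fin n) (a : Fin n) :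
    a ∈ strictTailSet τ i ↔ i < τ.symm a := by
  simp only [strictTailSet, Finset.mem_image, Finset.mem_filter, Finset.mem_univ, true_and]
  constructor
  · rintro ⟨j, hij, rfl⟩; simpa using hij
  · intro h; exact ⟨τ.symm a, h, by simp⟩

/-- the Choquet sum for a ranking permutation `τ` of `f` equals
`∑_{∅ ≠ A ⊆ Ω} 𝔡(A) · min_{i ∈ A} f(i)` (the minimum being expressed as `sInf (f '' A)`). -/
theorem choquet_sum_eq_mobius_sum {n : ℕ}
    (μ : Finset (Fin n) → ℝ) (hμ_empty : μ ∅ = 0)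
    (hμ_mono : ∀ A B : Finset (Fin n), A ⊆ B → μ A ≤ μ B)
    (f : Fin n → ℝ) (hf : ∀ i, 0 ≤ f i)
    (τ : Equiv.Perm (Fin n)) (hτ : Monotone fun i => f (τ i)) :
    ∑ i : Fin n, f (τ i) * (μ (tailSet τ i) - μ (strictTailSet τ i)) =
      ∑ A ∈ Finset.univ.powerset.filter (fun A : Finset (Fin n) => A.Nonempty),
        mobius μ A * sInf (f '' ↑A) := by
  rcases Nat.eq_zero_or_pos n with rfl | hn
  · rw [Finset.univ_eq_empty, Finset.powerset_empty, Finset.filter_singleton]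
    simp
  haveI : NeZero n := ⟨hn.ne'⟩
  -- index function
  set idx : Finset (Fin n) → Fin n := fun A =>
    if h : A.Nonempty then (A.image ⇑τ.symm).min' (h.image _) else 0 with hidx
  have idx_mem : ∀ A : Finset (Fin n), A.Nonempty → τ (idx A) ∈ A := by
    intro A hA
    have : idx A ∈ A.image ⇑τ.symm := by
      rw [hidx]; simp only [dif_pos hA]; exact (A.image ⇑τ.symm).min'_mem _
    obtain ⟨a, ha, h⟩ := Finset.mem_image.mp this
    rw [← h]; simpa using ha
  have idx_le : ∀ A : Finset (Fin n), ∀ a ∈ A, idx A ≤ τ.symm a := by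
    intro A a ha
    have hA : A.Nonempty := ⟨a, ha⟩
    rw [hidx]; simp only [dif_pos hA]
    exact Finset.min'_le _ _ (Finset.mem_image_of_mem _ ha)
  -- step 1: rewrite each term of the LHS
  have step1 : ∀ i : Fin n,
      f (τ i) * (μ (tailSet τ i) - μ (strictTailSet τ i))
      = ∑ B ∈ (strictTailSet τ i).powerset, f (τ i) * mobius μ (insert (τ i) B) := by
    intro i
    rw [← mobius_inv μ (tailSet τ i), ← mobius_inv μ (strictTailSet τ i)]
    rw [tailSet_eq, Finset.powerset_insert, Finset.sum_union, add_sub_cancel_left]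
    · rw [Finset.sum_image, Finset.mul_sum]
      intro B hB B' hB' hBB'
      rw [Finset.mem_coe, Finset.mem_powerset] at hB hB'
      have h1 : τ i ∉ B := fun h => not_mem_strictTailSet τ i (hB h)
      have h2 : τ i ∉ B' := fun h => not_mem_strictTailSet τ i (hB' h)
      rw [← Finset.erase_insert h1, ← Finset.erase_insert h2, hBB']
    · rw [Finset.disjoint_left]
      intro X hX hX'
      rw [Finset.mem_powerset] at hX
      obtain ⟨B, hB, rfl⟩ := Finset.mem_image.mp hX'
      exact not_mem_strictTailSet τ i (hX (Finset.mem_insert_self _ _))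
  rw [Finset.sum_congr rfl (fun i _ => step1 i)]
  rw [Finset.sum_sigma' Finset.univ (fun i => (strictTailSet τ i).powerset)
    (fun i B => f (τ i) * mobius μ (insert (τ i) B))]
  apply Finset.sum_nbij' (i := fun p => insert (τ p.1) p.2)
    (j := fun A => ⟨idx A, A.erase (τ (idx A))⟩)
  · intro p hp
    simp only [Finset.mem_filter, Finset.mem_powerset]
    exact ⟨Finset.subset_univ _, Finset.insert_nonempty _ _⟩
  · intro A hA
    simp only [Finset.mem_filter, Finset.mem_powerset] at hA
    simp only [Finset.mem_sigma, Finset.mem_univ, Finset.mem_powerset, true_and]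
    intro a ha
    rw [Finset.mem_erase] at ha
    rw [mem_strictTailSet_iff]
    have h1 := idx_le A a ha.2
    rcases lt_or_eq_of_le h1 with h | h
    · exact h
    · exact absurd (by rw [h]; simp) ha.1
  · rintro ⟨i, B⟩ hp
    simp only [Finset.mem_sigma, Finset.mem_univ, Finset.mem_powerset, true_and] at hp
    have hti : τ i ∉ B := fun h => not_mem_strictTailSet τ i (hp h)
    have hidxe : idx (insert (τ i) B) = i := by
      apply le_antisymm
      · have := idx_le (insert (τ i) B) (τ i) (Finset.mem_insert_self _ _)
        simpa using this
      · have hne : (insert (τ i) B).Nonempty := Finset.insert_nonempty _ _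
        have := idx_mem _ hne
        rcases Finset.mem_insert.mp this with h | h
        · exact le_of_eq (τ.injective h).symm
        · exact le_of_lt (((mem_strictTailSet_iff τ i _).mp (hp h)).trans_eq (by simp))
    refine Sigma.ext hidxe ?_
    rw [hidxe]
    simp only [heq_eq_eq]
    exact Finset.erase_insert hti
  · intro A hA
    simp only [Finset.mem_filter, Finset.mem_powerset] at hA
    exact Finset.insert_erase (idx_mem A hA.2)
  · rintro ⟨i, B⟩ hp
    simp only [Finset.mem_sigma, Finset.mem_univ, Finset.mem_powerset, true_and] at hp
    have hsinf : sInf (f '' ↑(insert (τ i) B)) = f (τ i) := by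
      apply IsLeast.csInf_eq
      constructor
      · exact Set.mem_image_of_mem f (by simp)
      · rintro y ⟨a, ha, rfl⟩
        simp only [Finset.coe_insert, Set.mem_insert_iff, Finset.mem_coe] at ha
        rcases ha with rfl | ha
        · exact le_rfl
        · have hlt := (mem_strictTailSet_iff τ i a).mp (hp ha)
          have := hτ hlt.le
          simpa using this
    rw [hsinf, mul_comm]
end

section
/- Let u and v be nonzero vectors in a finite-dimensional complex inner product space, let P_u and P_v be the orthogonal projections onto the spans of u and v respectively, and let P be the orthogonal projection onto span{u, v}. Then the commutator satisfies P_u P_v − P_v P_u = (P − P_u − P_v)(P_u − P_v). -/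
/-- The orthogonal projection onto a subspace `K`, as an operator on the ambient space. -/
noncomputable def projOp {V : Type*} [NormedAddCommGroup V] [InnerProductSpace ℂ V]
    [FiniteDimensional ℂ V] (K : Submodule ℂ V) : V →ₗ[ℂ] V :=
  K.subtype ∘ₗ (K.orthogonalProjectionOnto).toLinearMap

lemma projOp_comp_of_le {V : Type*} [NormedAddCommGroup V] [InnerProductSpace ℂ V]
    [FiniteDimensional ℂ V] {K L : Submodule ℂ V} (h : L ≤ K) :
    projOp K ∘ₗ projOp L = projOp L := by
  ext x
  simp only [projOp, LinearMap.comp_apply, Submodule.subtype_apply,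
    ContinuousLinearMap.coe_coe]
  exact congrArg Subtype.val (K.orthogonalProjectionOnto_mem_subspace_eq_self ⟨_, h (L.orthogonalProjectionOnto x).2⟩)

lemma projOp_idem {V : Type*} [NormedAddCommGroup V] [InnerProductSpace ℂ V]
    [FiniteDimensional ℂ V] (K : Submodule ℂ V) :
    projOp K ∘ₗ projOp K = projOp K :=
  projOp_comp_of_le le_rfl

/-- for nonzero vectors `u, v`, with `P_u, P_v` the projections
onto their spans and `P` the projection onto `span {u, v}`, the commutator
satisfies `P_u P_v − P_v P_u = (P − P_u − P_v)(P_u − P_v)`. -/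
theorem commutator_eq_mobius_mul {V : Type*} [NormedAddCommGroup V]
    [InnerProductSpace ℂ V] [FiniteDimensional ℂ V]
    (u v : V) (hu : u ≠ 0) (hv : v ≠ 0) :
    projOp (ℂ ∙ u) ∘ₗ projOp (ℂ ∙ v) - projOp (ℂ ∙ v) ∘ₗ projOp (ℂ ∙ u) =
      (projOp (Submodule.span ℂ {u, v}) - projOp (ℂ ∙ u) - projOp (ℂ ∙ v)) ∘ₗ
        (projOp (ℂ ∙ u) - projOp (ℂ ∙ v)) := by
  have hu' : (ℂ ∙ u) ≤ Submodule.span ℂ {u, v} :=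
    Submodule.span_mono (by simp)
  have hv' : (ℂ ∙ v) ≤ Submodule.span ℂ {u, v} :=
    Submodule.span_mono (by simp)
  have h1 := projOp_comp_of_le hu'
  have h2 := projOp_comp_of_le hv'
  have h3 := projOp_idem (V := V) (ℂ ∙ u)
  have h4 := projOp_idem (V := V) (ℂ ∙ v)
  simp only [LinearMap.sub_comp, LinearMap.comp_sub, h1, h2, h3, h4]
  abel
end
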